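/- Let q be a prime power and 𝔽_q the finite field with q elements. Let r ≥ 1 and δ ≥ 2 be integers, let A be an additive subgroup of 𝔽_q with |A| = r + δ − 1, let k be a positive multiple of r, and assume k − 1 + (δ − 1)(k/r − 1) < q. Let g(x) = ∏_{a∈A}(x − a). For a matrix a = (a_{i,j}) ∈ 𝔽_q^{r × (k/r)} (indices 0 ≤ i ≤ r−1, 0 ≤ j ≤ k/r − 1) define the polynomial f_a(x) = Σ_{i=0}^{r−1} Σ_{j=0}^{k/r−1} a_{i,j} g(x)^j x^i, and let C = {(f_a(x))_{x∈𝔽_q} : a ∈ 𝔽_q^{r×(k/r)}} ⊆ 𝔽_q^{𝔽_q} be the corresponding evaluation code of length n = q. Then: (i) C is an 𝔽_q-linear subspace of 𝔽_q^{𝔽_q} of dimension k; (ii) the minimum Hamming weight of a nonzero codeword of C is at least n − k + 1 − (δ − 1)(k/r − 1); (iii) for every coset S of A in (𝔽_q, +) and every a, the restriction of the function x ↦ f_a(x) to S coincides with the evaluation of a polynomial of degree at most r − 1; in particular the punctured code C_S = {(f_a(x))_{x∈S} : a} has minimum Hamming distance at least δ. -/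

import Mathlib

open Polynomial

/-- `g(x) = ∏_{a ∈ A} (x − a)`. -/
noncomputable def gpoly (F : Type) [Field F] [Fintype F] (A : AddSubgroup F)
    [DecidablePred (· ∈ A)] : Polynomial F :=
  ∏ a ∈ Finset.univ.filter (· ∈ A), (X - C a)

/-- `f_a(x) = Σ_{i<r} Σ_{j<w} a_{i,j} g(x)^j x^i`. -/
noncomputable def fPoly {F : Type} [Field F] [Fintype F] (A : AddSubgroup F)
    [DecidablePred (· ∈ A)] (r w : ℕ) (a : Fin r → Fin w → F) : Polynomial F :=
  ∑ i : Fin r, ∑ j : Fin w, C (a i j) * (gpoly F A) ^ (j : ℕ) * X ^ (i : ℕ)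

/-- The evaluation code `C = {(f_a(x))_{x ∈ F} : a}`. -/
def evCode {F : Type} [Field F] [Fintype F] (A : AddSubgroup F)
    [DecidablePred (· ∈ A)] (r w : ℕ) : Set (F → F) :=
  {v | ∃ a : Fin r → Fin w → F, v = fun x => (fPoly A r w a).eval x}

/- ### Auxiliary lemmas -/

lemma coeff_sum_C_mul_X_pow {F : Type} [Semiring F] {r : ℕ} (b : Fin r → F) (i₀ : Fin r) :
    (∑ i : Fin r, C (b i) * X ^ (i : ℕ)).coeff (i₀ : ℕ) = b i₀ := by
  rw [Polynomial.finset_sum_coeff, Finset.sum_eq_single i₀]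
  · simp
  · intro i _ hne
    simp only [Polynomial.coeff_C_mul, Polynomial.coeff_X_pow, Fin.val_eq_val]
    rw [if_neg (by exact fun h => hne h.symm)]
    simp
  · simp

lemma natDegree_sum_C_mul_X_pow_le {F : Type} [Field F] {r : ℕ} (b : Fin r → F) :
    (∑ i : Fin r, C (b i) * X ^ (i : ℕ)).natDegree ≤ r - 1 := by
  apply Polynomial.natDegree_sum_le_of_forall_le
  intro i _
  refine Polynomial.natDegree_mul_le.trans ?_
  have := i.isLt
  simp only [Polynomial.natDegree_C, Polynomial.natDegree_X_pow, zero_add]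
  omega

lemma gpoly_monic (F : Type) [Field F] [Fintype F] (A : AddSubgroup F)
    [DecidablePred (· ∈ A)] : (gpoly F A).Monic :=
  monic_prod_of_monic _ _ fun a _ => monic_X_sub_C a

lemma gpoly_natDegree (F : Type) [Field F] [Fintype F] (A : AddSubgroup F)
    [DecidablePred (· ∈ A)] :
    (gpoly F A).natDegree = (Finset.univ.filter (· ∈ A)).card := by
  rw [gpoly, Polynomial.natDegree_prod_of_monic _ _ fun a _ => monic_X_sub_C a]
  simp

lemma gpoly_eval_coset {F : Type} [Field F] [Fintype F] (A : AddSubgroup F)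
    [DecidablePred (· ∈ A)] {x c : F} (h : x - c ∈ A) :
    (gpoly F A).eval x = (gpoly F A).eval c := by
  simp only [gpoly, Polynomial.eval_prod, Polynomial.eval_sub, Polynomial.eval_X,
    Polynomial.eval_C]
  refine Finset.prod_bij' (fun a _ => a - (x - c)) (fun a _ => a + (x - c)) ?_ ?_ ?_ ?_ ?_
  · intro a ha
    simp only [Finset.mem_filter, Finset.mem_univ, true_and] at ha ⊢
    exact A.sub_mem ha h
  · intro a ha
    simp only [Finset.mem_filter, Finset.mem_univ, true_and] at ha ⊢
    exact A.add_mem ha h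
  · intro a _; ring
  · intro a _; ring
  · intro a _; ring

lemma sum_geom_eq_zero {F : Type} [Field F] (g : Polynomial F) (hg : g.Monic) :
    ∀ (w : ℕ) (q : ℕ → Polynomial F), (∀ j, (q j).natDegree < g.natDegree) →
    (∑ j ∈ Finset.range w, g ^ j * q j) = 0 → ∀ j < w, q j = 0 := by
  intro w
  induction w with
  | zero => simp
  | succ n ih =>
    intro q hq hsum j hj
    rw [Finset.sum_range_succ'] at hsum
    have hfac : ∑ i ∈ Finset.range n, g ^ (i + 1) * q (i + 1)
        = g * ∑ i ∈ Finset.range n, g ^ i * q (i + 1) := by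
      rw [Finset.mul_sum]
      exact Finset.sum_congr rfl fun i _ => by ring
    rw [hfac, pow_zero, one_mul] at hsum
    set t := ∑ i ∈ Finset.range n, g ^ i * q (i + 1) with ht
    have hq0 : q 0 = -(g * t) := by linear_combination hsum
    have htz : t = 0 := by
      by_contra htne
      have hgt : (g * t).natDegree = g.natDegree + t.natDegree :=
        Polynomial.natDegree_mul hg.ne_zero htne
      have : (q 0).natDegree = g.natDegree + t.natDegree := by
        rw [hq0, Polynomial.natDegree_neg, hgt]
      have := hq 0
      omega
    have hq0' : q 0 = 0 := by rw [hq0, htz, mul_zero, neg_zero]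
    have hrest : ∀ i < n, q (i + 1) = 0 := by
      apply ih (fun i => q (i + 1)) (fun i => hq (i + 1))
      rw [htz] at ht
      exact ht.symm
    rcases Nat.eq_zero_or_pos j with rfl | hjp
    · exact hq0'
    · obtain ⟨i, rfl⟩ := Nat.exists_eq_add_of_lt hjp
      rw [Nat.zero_add]
      exact hrest i (by omega)

section fPolyLemmas

variable {F : Type} [Field F] [Fintype F] (A : AddSubgroup F) [DecidablePred (· ∈ A)]
  (r w : ℕ)

lemma fPoly_add (a b : Fin r → Fin w → F) :
    fPoly A r w (a + b) = fPoly A r w a + fPoly A r w b := by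
  simp [fPoly, C_add, add_mul, Finset.sum_add_distrib]

lemma fPoly_sub (a b : Fin r → Fin w → F) :
    fPoly A r w (a - b) = fPoly A r w a - fPoly A r w b := by
  simp [fPoly, C_sub, sub_mul, Finset.sum_sub_distrib]

lemma fPoly_smul (c : F) (a : Fin r → Fin w → F) :
    fPoly A r w (c • a) = C c * fPoly A r w a := by
  simp [fPoly, C_mul, Finset.mul_sum, mul_assoc]

lemma fPoly_swap (a : Fin r → Fin w → F) :
    fPoly A r w a = ∑ j : Fin w, (gpoly F A) ^ (j : ℕ) *
      (∑ i : Fin r, C (a i j) * X ^ (i : ℕ)) := by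
  rw [fPoly, Finset.sum_comm]
  refine Finset.sum_congr rfl fun j _ => ?_
  rw [Finset.mul_sum]
  exact Finset.sum_congr rfl fun i _ => by ring

lemma fPoly_natDegree_le (a : Fin r → Fin w → F) :
    (fPoly A r w a).natDegree ≤
      (w - 1) * (gpoly F A).natDegree + (r - 1) := by
  apply Polynomial.natDegree_sum_le_of_forall_le
  intro i _
  apply Polynomial.natDegree_sum_le_of_forall_le
  intro j _
  have hi := i.isLt
  have hj := j.isLt
  calc (C (a i j) * gpoly F A ^ (j : ℕ) * X ^ (i : ℕ)).natDegree
      ≤ (C (a i j) * gpoly F A ^ (j : ℕ)).natDegree + (X ^ (i : ℕ)).natDegree :=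
        Polynomial.natDegree_mul_le
    _ ≤ (C (a i j)).natDegree + (gpoly F A ^ (j : ℕ)).natDegree + (i : ℕ) := by
        rw [Polynomial.natDegree_X_pow]
        exact Nat.add_le_add_right Polynomial.natDegree_mul_le _
    _ ≤ (j : ℕ) * (gpoly F A).natDegree + (i : ℕ) := by
        rw [Polynomial.natDegree_C, zero_add]
        exact Nat.add_le_add_right Polynomial.natDegree_pow_le _
    _ ≤ (w - 1) * (gpoly F A).natDegree + (r - 1) := by
        have : (j : ℕ) * (gpoly F A).natDegree ≤ (w - 1) * (gpoly F A).natDegree :=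
          Nat.mul_le_mul_right _ (by omega)
        omega

lemma fPoly_eq_zero_imp {r w : ℕ} (hw : 1 ≤ w)
    (hm : r - 1 < (gpoly F A).natDegree)
    {a : Fin r → Fin w → F} (h : fPoly A r w a = 0) : a = 0 := by
  set g := gpoly F A with hg
  set q : ℕ → Polynomial F := fun j =>
    ∑ i : Fin r, C (a i ⟨min j (w - 1), by omega⟩) * X ^ (i : ℕ) with hqdef
  have hq : ∀ j, (q j).natDegree < g.natDegree := fun j =>
    lt_of_le_of_lt (natDegree_sum_C_mul_X_pow_le _) hm
  have hfin : ∀ j : Fin w, (⟨min (j : ℕ) (w - 1), by omega⟩ : Fin w) = j := by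
    intro j
    have := j.isLt
    apply Fin.ext
    simp
    omega
  have hrepr : fPoly A r w a = ∑ j ∈ Finset.range w, g ^ j * q j := by
    rw [fPoly_swap, ← Fin.sum_univ_eq_sum_range (fun j => g ^ j * q j) w]
    refine Finset.sum_congr rfl fun j _ => ?_
    show g ^ (j : ℕ) * _ = g ^ (j : ℕ) * q (j : ℕ)
    congr 1
    simp only [hqdef]
    rw [hfin j]
  have hz := sum_geom_eq_zero g (gpoly_monic F A) w q hq (hrepr ▸ h)
  funext i j
  have h1 : q (j : ℕ) = 0 := hz (j : ℕ) j.isLt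
  have h2 := coeff_sum_C_mul_X_pow (fun i => a i ⟨min (j : ℕ) (w - 1), by omega⟩) i
  rw [show (∑ i : Fin r, C (a i ⟨min (j : ℕ) (w - 1), by omega⟩) * X ^ (i : ℕ)) = q (j : ℕ)
        from rfl, h1] at h2
  rw [hfin j] at h2
  simpa using h2.symm

end fPolyLemmas

/-- The Tamo–Barg evaluation LRC: dimension `k`, minimum distance at least
`n − k + 1 − (δ−1)(k/r − 1)`, and `(r, δ)`-locality on the cosets of `A`. -/
theorem stmt18 {F : Type} [Field F] [Fintype F] [DecidableEq F]
    (r δ w : ℕ) (hr : 1 ≤ r) (hδ : 2 ≤ δ) (hw : 1 ≤ w)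
    (A : AddSubgroup F) [DecidablePred (· ∈ A)]
    (hA : (Finset.univ.filter (· ∈ A)).card = r + δ - 1)
    (k : ℕ) (hk : k = r * w)
    (hq : (k : ℤ) - 1 + ((δ : ℤ) - 1) * ((w : ℤ) - 1) < (Fintype.card F : ℤ)) :
    (∃ S : Submodule F (F → F), (S : Set (F → F)) = evCode A r w ∧
      Module.finrank F S = k) ∧
    (∀ v ∈ evCode A r w, v ≠ (0 : F → F) →
      (Fintype.card F : ℤ) - (k : ℤ) + 1 - ((δ : ℤ) - 1) * ((w : ℤ) - 1) ≤
        (hammingNorm v : ℤ)) ∧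
    (∀ c : F,
      (∀ a : Fin r → Fin w → F, ∃ p : Polynomial F, p.natDegree ≤ r - 1 ∧
        ∀ x : F, x - c ∈ A → (fPoly A r w a).eval x = p.eval x) ∧
      (∀ u ∈ evCode A r w, ∀ v ∈ evCode A r w, (∃ x : F, x - c ∈ A ∧ u x ≠ v x) →
        δ ≤ (Finset.univ.filter fun x : F => x - c ∈ A ∧ u x ≠ v x).card)) := by
  classical
  have hmval : (gpoly F A).natDegree = r + δ - 1 := by
    rw [gpoly_natDegree, hA]
  have hm : r - 1 < (gpoly F A).natDegree := by rw [hmval]; omega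
  have hDle : ∀ a : Fin r → Fin w → F,
      (fPoly A r w a).natDegree ≤ (w - 1) * (r + δ - 1) + (r - 1) := by
    intro a
    have := fPoly_natDegree_le A r w a
    rw [hmval] at this
    exact this
  have hDZ : (((w - 1) * (r + δ - 1) + (r - 1) : ℕ) : ℤ)
      = (k : ℤ) - 1 + ((δ : ℤ) - 1) * ((w : ℤ) - 1) := by
    have h1 : ((w - 1 : ℕ) : ℤ) = (w : ℤ) - 1 := by omega
    have h2 : ((r - 1 : ℕ) : ℤ) = (r : ℤ) - 1 := by omega
    have h3 : ((r + δ - 1 : ℕ) : ℤ) = (r : ℤ) + (δ : ℤ) - 1 := by omega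
    push_cast
    rw [h1, h2, h3, hk]
    push_cast
    ring
  have hDlt : (w - 1) * (r + δ - 1) + (r - 1) < Fintype.card F := by
    have : (((w - 1) * (r + δ - 1) + (r - 1) : ℕ) : ℤ) < (Fintype.card F : ℤ) := by
      rw [hDZ]; exact hq
    exact_mod_cast this
  have hzero : ∀ a : Fin r → Fin w → F,
      (∀ x : F, (fPoly A r w a).eval x = 0) → a = 0 := by
    intro a h
    refine fPoly_eq_zero_imp A hw hm ?_
    apply Polynomial.eq_zero_of_natDegree_lt_card_of_eval_eq_zero _ Function.injective_id h
    exact lt_of_le_of_lt (hDle a) (by simpa using hDlt)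
  refine ⟨?_, ?_, ?_⟩
  · -- dimension
    let φ : (Fin r → Fin w → F) →ₗ[F] (F → F) :=
      { toFun := fun a => fun x => (fPoly A r w a).eval x
        map_add' := fun a b => by
          funext x
          show (fPoly A r w (a + b)).eval x = (fPoly A r w a).eval x + (fPoly A r w b).eval x
          rw [fPoly_add]; simp
        map_smul' := fun c a => by
          funext x
          show (fPoly A r w (c • a)).eval x = c * (fPoly A r w a).eval x
          rw [fPoly_smul]; simp }
    have hφinj : Function.Injective φ := by
      rw [← LinearMap.ker_eq_bot, LinearMap.ker_eq_bot']
      intro a ha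
      exact hzero a fun x => congrFun ha x
    refine ⟨LinearMap.range φ, ?_, ?_⟩
    · ext v
      simp only [SetLike.mem_coe, LinearMap.mem_range, evCode, Set.mem_setOf_eq]
      constructor
      · rintro ⟨a, rfl⟩; exact ⟨a, rfl⟩
      · rintro ⟨a, rfl⟩; exact ⟨a, rfl⟩
    · rw [LinearMap.finrank_range_of_inj hφinj, hk]
      rw [Module.finrank_pi_fintype]
      simp [Module.finrank_pi]
  · -- distance
    rintro v ⟨a, rfl⟩ hvne
    have hfne : fPoly A r w a ≠ 0 := by
      intro h0
      exact hvne (funext fun x => by rw [h0]; simp)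
    have hroots : (Finset.univ.filter fun x : F => (fPoly A r w a).eval x = 0).card
        ≤ (w - 1) * (r + δ - 1) + (r - 1) := by
      refine le_trans (Polynomial.card_le_degree_of_subset_roots ?_) (hDle a)
      intro x hx
      rw [Finset.mem_val, Finset.mem_filter] at hx
      rw [Polynomial.mem_roots hfne]
      exact hx.2
    have hsplit := Finset.card_filter_add_card_filter_not (s := (Finset.univ : Finset F))
        (p := fun x : F => (fPoly A r w a).eval x = 0)
    have hnorm : hammingNorm (fun x : F => (fPoly A r w a).eval x)
        = (Finset.univ.filter fun x : F => ¬ (fPoly A r w a).eval x = 0).card := by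
      simp only [hammingNorm, ne_eq]
    have hcard : Fintype.card F ≤
        hammingNorm (fun x : F => (fPoly A r w a).eval x)
          + ((w - 1) * (r + δ - 1) + (r - 1)) := by
      rw [hnorm]
      rw [Finset.card_univ] at hsplit
      omega
    have hcardZ : (Fintype.card F : ℤ) ≤
        (hammingNorm (fun x : F => (fPoly A r w a).eval x) : ℤ)
          + (((w - 1) * (r + δ - 1) + (r - 1) : ℕ) : ℤ) := by exact_mod_cast hcard
    rw [hDZ] at hcardZ
    linarith
  · -- locality
    intro c
    have key : ∀ a : Fin r → Fin w → F, ∃ p : Polynomial F, p.natDegree ≤ r - 1 ∧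
        ∀ x : F, x - c ∈ A → (fPoly A r w a).eval x = p.eval x := by
      intro a
      refine ⟨∑ i : Fin r, C (∑ j : Fin w, a i j * (gpoly F A).eval c ^ (j : ℕ)) * X ^ (i : ℕ),
        natDegree_sum_C_mul_X_pow_le _, ?_⟩
      intro x hx
      simp only [fPoly, Polynomial.eval_finset_sum, Polynomial.eval_mul, Polynomial.eval_pow,
        Polynomial.eval_C, Polynomial.eval_X]
      rw [gpoly_eval_coset A hx]
      simp [Finset.sum_mul]
    refine ⟨key, ?_⟩
    intro u hu v hv hex
    obtain ⟨a, rfl⟩ := hu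
    obtain ⟨b, rfl⟩ := hv
    obtain ⟨x₀, hx₀A, hx₀ne⟩ := hex
    obtain ⟨p, hpdeg, hpev⟩ := key (a - b)
    have hpev' : ∀ x : F, x - c ∈ A →
        (fPoly A r w a).eval x - (fPoly A r w b).eval x = p.eval x := by
      intro x hx
      rw [← hpev x hx, fPoly_sub]
      simp
    have hiff : ∀ x : F, x - c ∈ A →
        ((fPoly A r w a).eval x ≠ (fPoly A r w b).eval x ↔ ¬ p.eval x = 0) := by
      intro x hx
      rw [← hpev' x hx]
      exact sub_ne_zero.symm
    have hpne : p ≠ 0 := by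
      intro h0
      apply hx₀ne
      have h := hpev' x₀ hx₀A
      rw [h0] at h
      simp only [Polynomial.eval_zero] at h
      exact sub_eq_zero.mp h
    set T := Finset.univ.filter (fun x : F => x - c ∈ A) with hT
    have hTcard : T.card = r + δ - 1 := by
      rw [hT, ← hA]
      apply Finset.card_bij (fun x _ => x - c)
      · intro x hx
        simp only [Finset.mem_filter, Finset.mem_univ, true_and] at hx ⊢
        exact hx
      · intro x hx y hy hxy
        have : x - c + c = y - c + c := by rw [hxy]
        simpa using this
      · intro y hy
        simp only [Finset.mem_filter, Finset.mem_univ, true_and] at hy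
        exact ⟨y + c, by simp only [Finset.mem_filter, Finset.mem_univ, true_and]; simpa, by ring⟩
    have hfilter : (Finset.univ.filter fun x : F => x - c ∈ A ∧
          (fun y : F => (fPoly A r w a).eval y) x ≠ (fun y : F => (fPoly A r w b).eval y) x)
        = T.filter (fun x => ¬ p.eval x = 0) := by
      rw [hT, Finset.filter_filter]
      apply Finset.filter_congr
      intro x _
      simp only
      constructor
      · rintro ⟨h1, h2⟩
        exact ⟨h1, (hiff x h1).mp h2⟩
      · rintro ⟨h1, h2⟩
        exact ⟨h1, (hiff x h1).mpr h2⟩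
    rw [hfilter]
    have h0card : (T.filter fun x => p.eval x = 0).card ≤ r - 1 := by
      refine le_trans (Polynomial.card_le_degree_of_subset_roots ?_) hpdeg
      intro x hx
      rw [Finset.mem_val, Finset.mem_filter] at hx
      rw [Polynomial.mem_roots hpne]
      exact hx.2
    have hsplit := Finset.card_filter_add_card_filter_not (s := T)
        (p := fun x : F => p.eval x = 0)
    omega
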